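/- If A is a Hurwitz real n×n matrix, then A is invertible, the map t ↦ exp(tA) is integrable on [0,∞), and ∫₀^∞ exp(tA) dt = −A⁻¹. -/

import Mathlib

open MeasureTheory Matrix

section HurwitzAux

open NormedSpace Filter

variable {n : ℕ}

private lemma hurwitz_hasSum_exp_mulVec (M : Matrix (Fin n) (Fin n) ℂ) (v : Fin n → ℂ) :
    HasSum (fun k : ℕ => ((k.factorial : ℝ)⁻¹ • M ^ k) *ᵥ v) (NormedSpace.exp M *ᵥ v) := by
  letI : NormedRing (Matrix (Fin n) (Fin n) ℂ) := Matrix.linftyOpNormedRing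
  letI : NormedAlgebra ℝ (Matrix (Fin n) (Fin n) ℂ) := Matrix.linftyOpNormedAlgebra
  have h := NormedSpace.exp_series_hasSum_exp' (𝕂 := ℝ) M
  have h2 := h.map (AddMonoidHom.mk' (fun X : Matrix (Fin n) (Fin n) ℂ => X *ᵥ v)
      (fun X Y => Matrix.add_mulVec X Y v))
    (Continuous.matrix_mulVec continuous_id continuous_const)
  simp only [Function.comp_def] at h2
  exact h2

private lemma hurwitz_exp_mulVec_eq (B : Matrix (Fin n) (Fin n) ℂ) (μ : ℂ) (t : ℝ)
    (v : Fin n → ℂ) (k₀ : ℕ) (hv : ((B - μ • 1) ^ k₀) *ᵥ v = 0) :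
    NormedSpace.exp (t • B) *ᵥ v = Complex.exp ((t : ℂ) * μ) •
      ∑ k ∈ Finset.range k₀, (t ^ k / (k.factorial : ℝ)) • (((B - μ • 1) ^ k) *ᵥ v) := by
  set N := B - μ • 1 with hN
  have hBsplit : t • B = t • N + t • (μ • (1 : Matrix (Fin n) (Fin n) ℂ)) := by
    rw [← smul_add, hN, sub_add_cancel]
  have hcomm : Commute (t • N) (t • (μ • (1 : Matrix (Fin n) (Fin n) ℂ))) :=
    (((Commute.one_right N).smul_right μ).smul_left t).smul_right t
  have hscalar : NormedSpace.exp (t • (μ • (1 : Matrix (Fin n) (Fin n) ℂ)))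
      = Complex.exp ((t : ℂ) * μ) • (1 : Matrix (Fin n) (Fin n) ℂ) := by
    have h1 : t • (μ • (1 : Matrix (Fin n) (Fin n) ℂ))
        = Matrix.diagonal (fun _ : Fin n => (t : ℂ) * μ) := by
      ext i j
      by_cases h : i = j
      · subst h
        simp [Matrix.diagonal_apply_eq, Matrix.one_apply_eq, Complex.real_smul]
      · simp [Matrix.diagonal_apply_ne _ h, Matrix.one_apply_ne h]
    have h2 : NormedSpace.exp (fun _ : Fin n => (t : ℂ) * μ)
        = fun _ : Fin n => Complex.exp ((t : ℂ) * μ) := by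
      rw [Pi.exp_def]
      funext i
      rw [← Complex.exp_eq_exp_ℂ]
    rw [h1, Matrix.exp_diagonal, h2]
    ext i j
    by_cases h : i = j
    · subst h
      simp [Matrix.diagonal_apply_eq, Matrix.one_apply_eq]
    · simp [Matrix.diagonal_apply_ne _ h, Matrix.one_apply_ne h]
  have hterm : ∀ k : ℕ, (((k.factorial : ℝ))⁻¹ • (t • N) ^ k) *ᵥ v
      = (t ^ k / (k.factorial : ℝ)) • (N ^ k *ᵥ v) := by
    intro k
    rw [smul_pow, smul_comm, Matrix.smul_mulVec, Matrix.smul_mulVec,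
      smul_smul, div_eq_mul_inv]
  have hzero : ∀ k ∉ Finset.range k₀, (t ^ k / (k.factorial : ℝ)) • (N ^ k *ᵥ v) = 0 := by
    intro k hk
    rw [Finset.mem_range, not_lt] at hk
    have : N ^ k *ᵥ v = 0 := by
      rw [show k = (k - k₀) + k₀ by omega, pow_add, ← Matrix.mulVec_mulVec, hv,
        Matrix.mulVec_zero]
    rw [this, smul_zero]
  have hsum := hurwitz_hasSum_exp_mulVec (t • N) v
  simp_rw [hterm] at hsum
  have hfin : NormedSpace.exp (t • N) *ᵥ v
      = ∑ k ∈ Finset.range k₀, (t ^ k / (k.factorial : ℝ)) • (N ^ k *ᵥ v) :=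
    hsum.unique (hasSum_sum_of_ne_finset_zero hzero)
  rw [hBsplit, Matrix.exp_add_of_commute _ _ hcomm, hscalar, mul_smul_comm, mul_one,
    Matrix.smul_mulVec, hfin]

private lemma hurwitz_entry_decay (B : Matrix (Fin n) (Fin n) ℂ)
    (hB : ∀ μ ∈ spectrum ℂ B, μ.re < 0) :
    ∃ δ : ℝ, 0 < δ ∧ ∃ C : ℝ, 0 ≤ C ∧ ∀ t : ℝ, 0 ≤ t → ∀ i j : Fin n,
      ‖NormedSpace.exp (t • B) i j‖ ≤ C * Real.exp (-δ * t) := by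
  classical
  set f : Module.End ℂ (Fin n → ℂ) := Matrix.toLinAlgEquiv' B with hf
  let V : Submodule ℂ (Fin n → ℂ) :=
    { carrier := {v | ∃ δ : ℝ, 0 < δ ∧ ∃ C : ℝ, ∀ t : ℝ, 0 ≤ t →
        ‖NormedSpace.exp (t • B) *ᵥ v‖ ≤ C * Real.exp (-δ * t)}
      zero_mem' := ⟨1, one_pos, 0, fun t _ => by simp [Matrix.mulVec_zero]⟩
      add_mem' := by
        rintro a b ⟨δ₁, hδ₁, C₁, h₁⟩ ⟨δ₂, hδ₂, C₂, h₂⟩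
        have hC₁ : 0 ≤ C₁ := le_trans (norm_nonneg _) (by simpa using h₁ 0 le_rfl)
        have hC₂ : 0 ≤ C₂ := le_trans (norm_nonneg _) (by simpa using h₂ 0 le_rfl)
        refine ⟨min δ₁ δ₂, lt_min hδ₁ hδ₂, C₁ + C₂, fun t ht => ?_⟩
        have e₁ : Real.exp (-δ₁ * t) ≤ Real.exp (-(min δ₁ δ₂) * t) := by
          apply Real.exp_le_exp.mpr
          nlinarith [min_le_left δ₁ δ₂]
        have e₂ : Real.exp (-δ₂ * t) ≤ Real.exp (-(min δ₁ δ₂) * t) := by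
          apply Real.exp_le_exp.mpr
          nlinarith [min_le_right δ₁ δ₂]
        calc ‖NormedSpace.exp (t • B) *ᵥ (a + b)‖
            = ‖NormedSpace.exp (t • B) *ᵥ a + NormedSpace.exp (t • B) *ᵥ b‖ := by
              rw [Matrix.mulVec_add]
          _ ≤ ‖NormedSpace.exp (t • B) *ᵥ a‖ + ‖NormedSpace.exp (t • B) *ᵥ b‖ :=
              norm_add_le _ _
          _ ≤ C₁ * Real.exp (-δ₁ * t) + C₂ * Real.exp (-δ₂ * t) :=
              add_le_add (h₁ t ht) (h₂ t ht)
          _ ≤ C₁ * Real.exp (-(min δ₁ δ₂) * t) + C₂ * Real.exp (-(min δ₁ δ₂) * t) :=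
              add_le_add (mul_le_mul_of_nonneg_left e₁ hC₁) (mul_le_mul_of_nonneg_left e₂ hC₂)
          _ = (C₁ + C₂) * Real.exp (-(min δ₁ δ₂) * t) := by ring
      smul_mem' := by
        rintro c a ⟨δ, hδ, C, h⟩
        refine ⟨δ, hδ, ‖c‖ * C, fun t ht => ?_⟩
        rw [Matrix.mulVec_smul, norm_smul, mul_assoc]
        exact mul_le_mul_of_nonneg_left (h t ht) (norm_nonneg c) }
  have hle : ∀ μ : ℂ, f.maxGenEigenspace μ ≤ V := by
    intro μ v hv
    rcases eq_or_ne v 0 with rfl | hv0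
    · exact V.zero_mem
    have hμspec : μ ∈ spectrum ℂ B := by
      have h1 : f.HasUnifEigenvalue μ ⊤ := (Submodule.ne_bot_iff _).mpr ⟨v, hv, hv0⟩
      have h2 : f.HasUnifEigenvalue μ 1 := h1.lt (by norm_num)
      have h3 := h2.mem_spectrum
      rwa [hf, AlgEquiv.spectrum_eq (Matrix.toLinAlgEquiv') B] at h3
    have hμ : μ.re < 0 := hB μ hμspec
    obtain ⟨k₀, hk₀⟩ := (Module.End.mem_maxGenEigenspace f μ v).mp hv
    have hmat : ((B - μ • 1) ^ k₀) *ᵥ v = 0 := by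
      have heq : (f - μ • 1) ^ k₀ = Matrix.toLinAlgEquiv' ((B - μ • 1) ^ k₀) := by
        rw [map_pow, map_sub, _root_.map_smul, _root_.map_one, hf]
      rw [← Matrix.toLinAlgEquiv'_apply, ← heq]
      exact hk₀
    set δ := -μ.re / 2 with hδdef
    have hδ : 0 < δ := by simp only [hδdef]; linarith
    refine ⟨δ, hδ, ∑ k ∈ Finset.range k₀, δ⁻¹ ^ k * ‖((B - μ • 1) ^ k) *ᵥ v‖, fun t ht => ?_⟩
    rw [hurwitz_exp_mulVec_eq B μ t v k₀ hmat, norm_smul]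
    have habs : ‖Complex.exp ((t : ℂ) * μ)‖ = Real.exp (t * μ.re) := by
      rw [Complex.norm_exp]
      congr 1
      simp
    rw [habs]
    have hsumle : ‖∑ k ∈ Finset.range k₀, (t ^ k / (k.factorial : ℝ)) • (((B - μ • 1) ^ k) *ᵥ v)‖
        ≤ ∑ k ∈ Finset.range k₀, (δ⁻¹ ^ k * ‖((B - μ • 1) ^ k) *ᵥ v‖) * Real.exp (δ * t) := by
      refine le_trans (norm_sum_le _ _) (Finset.sum_le_sum fun k _ => ?_)
      rw [norm_smul, Real.norm_eq_abs, abs_of_nonneg (by positivity)]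
      have hpow : t ^ k / (k.factorial : ℝ) ≤ δ⁻¹ ^ k * Real.exp (δ * t) := by
        have h1 := Real.pow_div_factorial_le_exp (δ * t) (by positivity) k
        have h2 : (δ * t) ^ k = δ ^ k * t ^ k := mul_pow δ t k
        rw [h2] at h1
        calc t ^ k / (k.factorial : ℝ) = δ⁻¹ ^ k * (δ ^ k * t ^ k / (k.factorial : ℝ)) := by
              rw [← mul_div_assoc, ← mul_assoc, ← mul_pow, inv_mul_cancel₀ hδ.ne', one_pow, one_mul]
          _ ≤ δ⁻¹ ^ k * Real.exp (δ * t) := by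
              apply mul_le_mul_of_nonneg_left h1 (by positivity)
      calc t ^ k / (k.factorial : ℝ) * ‖((B - μ • 1) ^ k) *ᵥ v‖
          ≤ δ⁻¹ ^ k * Real.exp (δ * t) * ‖((B - μ • 1) ^ k) *ᵥ v‖ :=
            mul_le_mul_of_nonneg_right hpow (norm_nonneg _)
        _ = δ⁻¹ ^ k * ‖((B - μ • 1) ^ k) *ᵥ v‖ * Real.exp (δ * t) := by ring
    calc Real.exp (t * μ.re) * ‖∑ k ∈ Finset.range k₀, (t ^ k / (k.factorial : ℝ)) •
            (((B - μ • 1) ^ k) *ᵥ v)‖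
        ≤ Real.exp (t * μ.re) * (∑ k ∈ Finset.range k₀,
            (δ⁻¹ ^ k * ‖((B - μ • 1) ^ k) *ᵥ v‖) * Real.exp (δ * t)) :=
          mul_le_mul_of_nonneg_left hsumle (Real.exp_pos _).le
      _ = (∑ k ∈ Finset.range k₀, δ⁻¹ ^ k * ‖((B - μ • 1) ^ k) *ᵥ v‖) *
            (Real.exp (t * μ.re) * Real.exp (δ * t)) := by
          rw [← Finset.sum_mul]; ring
      _ = (∑ k ∈ Finset.range k₀, δ⁻¹ ^ k * ‖((B - μ • 1) ^ k) *ᵥ v‖) * Real.exp (-δ * t) := by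
          rw [← Real.exp_add]
          congr 1
          simp only [hδdef]
          ring
  have htop := Module.End.iSup_maxGenEigenspace_eq_top f
  have hV : ∀ v : Fin n → ℂ, v ∈ V := by
    intro v
    have hle' : (⊤ : Submodule ℂ (Fin n → ℂ)) ≤ V := htop ▸ iSup_le hle
    exact hle' Submodule.mem_top
  rcases Nat.eq_zero_or_pos n with hn | hn
  · subst hn
    exact ⟨1, one_pos, 0, le_rfl, fun t _ i _ => i.elim0⟩
  haveI : Nonempty (Fin n) := Fin.pos_iff_nonempty.mp hn
  choose δf hδf Cf hCf using fun j : Fin n => hV (Pi.single j (1 : ℂ))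
  have hCf0 : ∀ j, 0 ≤ Cf j := fun j =>
    le_trans (norm_nonneg _) (by simpa using hCf j 0 le_rfl)
  set δ₀ := Finset.univ.inf' Finset.univ_nonempty δf with hδ₀
  refine ⟨δ₀, ?_, ∑ j, Cf j, Finset.sum_nonneg fun j _ => hCf0 j, fun t ht i j => ?_⟩
  · exact (Finset.lt_inf'_iff _).mpr fun j _ => hδf j
  have h1 : ‖NormedSpace.exp (t • B) i j‖
      = ‖(NormedSpace.exp (t • B) *ᵥ Pi.single j 1) i‖ := by
    rw [Matrix.mulVec_single_one]
    rfl
  rw [h1]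
  calc ‖(NormedSpace.exp (t • B) *ᵥ Pi.single j 1) i‖
      ≤ ‖NormedSpace.exp (t • B) *ᵥ Pi.single j 1‖ := norm_le_pi_norm _ i
    _ ≤ Cf j * Real.exp (-δf j * t) := hCf j t ht
    _ ≤ Cf j * Real.exp (-δ₀ * t) := by
        apply mul_le_mul_of_nonneg_left _ (hCf0 j)
        apply Real.exp_le_exp.mpr
        have : δ₀ ≤ δf j := Finset.inf'_le _ (Finset.mem_univ j)
        nlinarith
    _ ≤ (∑ j', Cf j') * Real.exp (-δ₀ * t) := by
        apply mul_le_mul_of_nonneg_right _ (Real.exp_pos _).le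
        exact Finset.single_le_sum (fun j' _ => hCf0 j') (Finset.mem_univ j)

private lemma hurwitz_exp_continuous (A : Matrix (Fin n) (Fin n) ℝ) :
    Continuous fun t : ℝ => NormedSpace.exp (t • A) := by
  letI : NormedRing (Matrix (Fin n) (Fin n) ℝ) := Matrix.linftyOpNormedRing
  letI : NormedAlgebra ℝ (Matrix (Fin n) (Fin n) ℝ) := Matrix.linftyOpNormedAlgebra
  letI : NormedAlgebra ℚ (Matrix (Fin n) (Fin n) ℝ) := Matrix.linftyOpNormedAlgebra
  exact NormedSpace.exp_continuous.comp (continuous_id.smul continuous_const)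

private lemma hurwitz_exp_slope (A : Matrix (Fin n) (Fin n) ℝ) (t₀ : ℝ) :
    Filter.Tendsto (slope (fun t : ℝ => NormedSpace.exp (t • A)) t₀) (nhdsWithin t₀ {t₀}ᶜ)
      (nhds (NormedSpace.exp (t₀ • A) * A)) := by
  letI : NormedRing (Matrix (Fin n) (Fin n) ℝ) := Matrix.linftyOpNormedRing
  letI : NormedAlgebra ℝ (Matrix (Fin n) (Fin n) ℝ) := Matrix.linftyOpNormedAlgebra
  exact hasDerivAt_iff_tendsto_slope.mp (hasDerivAt_exp_smul_const A t₀)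

private lemma hurwitz_exp_map_ofReal (A : Matrix (Fin n) (Fin n) ℝ) (t : ℝ) :
    (NormedSpace.exp (t • A)).map Complex.ofReal
      = NormedSpace.exp (t • A.map Complex.ofReal) := by
  letI : NormedRing (Matrix (Fin n) (Fin n) ℝ) := Matrix.linftyOpNormedRing
  letI : NormedAlgebra ℝ (Matrix (Fin n) (Fin n) ℝ) := Matrix.linftyOpNormedAlgebra
  letI : NormedRing (Matrix (Fin n) (Fin n) ℂ) := Matrix.linftyOpNormedRing
  letI : NormedAlgebra ℝ (Matrix (Fin n) (Fin n) ℂ) := Matrix.linftyOpNormedAlgebra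
  letI : NormedAlgebra ℚ (Matrix (Fin n) (Fin n) ℝ) := Matrix.linftyOpNormedAlgebra
  letI : NormedAlgebra ℚ (Matrix (Fin n) (Fin n) ℂ) := Matrix.linftyOpNormedAlgebra
  have hcont : Continuous (Complex.ofRealHom.mapMatrix :
      Matrix (Fin n) (Fin n) ℝ →+* Matrix (Fin n) (Fin n) ℂ) :=
    Continuous.matrix_map continuous_id Complex.continuous_ofReal
  have h := map_exp (Complex.ofRealHom.mapMatrix :
      Matrix (Fin n) (Fin n) ℝ →+* Matrix (Fin n) (Fin n) ℂ) hcont (t • A)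
  have hsm : ((t • A).map Complex.ofReal : Matrix (Fin n) (Fin n) ℂ)
      = t • (A.map Complex.ofReal) := by
    ext i j
    simp [Matrix.map_apply, Complex.real_smul]
  have hcoe : (NormedSpace.exp (t • A)).map Complex.ofReal
      = NormedSpace.exp ((t • A).map Complex.ofReal) := h
  rw [hsm] at hcoe
  exact hcoe

end HurwitzAux


attribute [local instance] Matrix.normedAddCommGroup Matrix.normedSpace
/-- If `A` is a Hurwitz real `n × n` matrix (all complex eigenvalues have
strictly negative real part), then `A` is invertible, `t ↦ exp(tA)` is integrable on
`[0,∞)`, and `∫₀^∞ exp(tA) dt = −A⁻¹`. -/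
theorem hurwitz_integral_exp {n : ℕ}
    (A : Matrix (Fin n) (Fin n) ℝ)
    (hA : ∀ μ ∈ spectrum ℂ (A.map (Complex.ofReal)), μ.re < 0) :
    IsUnit A ∧
      @IntegrableOn ℝ _ _ _ NormedAddCommGroup.toENormedAddCommMonoid.toContinuousENorm
        (fun t : ℝ => NormedSpace.exp (t • A)) (Set.Ici 0) volume ∧
      ∫ t in Set.Ici (0 : ℝ), NormedSpace.exp (t • A) = -A⁻¹ := by
  letI : ContinuousENorm (Matrix (Fin n) (Fin n) ℝ) :=
    NormedAddCommGroup.toENormedAddCommMonoid.toContinuousENorm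
  haveI : TopologicalSpace.PseudoMetrizableSpace (Matrix (Fin n) (Fin n) ℝ) :=
    inferInstanceAs (TopologicalSpace.PseudoMetrizableSpace (Fin n → Fin n → ℝ))
  set B := A.map (Complex.ofReal) with hB
  -- invertibility
  have hunit : IsUnit A := by
    have h0 : (0 : ℂ) ∉ spectrum ℂ B := fun h => by simpa using hA 0 h
    have hBunit : IsUnit B := not_not.mp fun h => h0 ((spectrum.zero_mem_iff ℂ).mpr h)
    have hdet : IsUnit B.det := (Matrix.isUnit_iff_isUnit_det B).mp hBunit
    have hdet2 : B.det = (A.det : ℂ) := (RingHom.map_det Complex.ofRealHom A).symm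
    rw [hdet2] at hdet
    have : A.det ≠ 0 := fun h => by simp [h] at hdet
    exact (Matrix.isUnit_iff_isUnit_det A).mpr (Ne.isUnit this)
  -- norm bound
  obtain ⟨δ, hδ, C, hC, hbound⟩ := hurwitz_entry_decay B hA
  have hnorm : ∀ t : ℝ, 0 ≤ t → ‖NormedSpace.exp (t • A)‖ ≤ C * Real.exp (-δ * t) := by
    intro t ht
    rw [Matrix.norm_le_iff (by positivity)]
    intro i j
    have h1 : ‖NormedSpace.exp (t • A) i j‖
        = ‖NormedSpace.exp (t • B) i j‖ := by
      have h2 : ((NormedSpace.exp (t • A)).map Complex.ofReal) i j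
          = NormedSpace.exp (t • B) i j := by rw [hurwitz_exp_map_ofReal]
      rw [← h2, Matrix.map_apply, Complex.norm_real, Real.norm_eq_abs]
    rw [h1]
    exact hbound t ht i j
  have hcont : Continuous fun t : ℝ => NormedSpace.exp (t • A) := hurwitz_exp_continuous A
  -- integrability
  have hint : IntegrableOn (fun t : ℝ => NormedSpace.exp (t • A)) (Set.Ici 0) := by
    have hg : IntegrableOn (fun t : ℝ => C * Real.exp (-δ * t)) (Set.Ici 0) := by
      rw [integrableOn_Ici_iff_integrableOn_Ioi]
      exact (exp_neg_integrableOn_Ioi 0 hδ).const_mul C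
    refine Integrable.mono' hg hcont.aestronglyMeasurable.restrict ?_
    refine (ae_restrict_iff' measurableSet_Ici).mpr (ae_of_all _ fun t ht => ?_)
    exact hnorm t ht
  refine ⟨hunit, hint, ?_⟩
  -- derivative
  have hder : ∀ t : ℝ, HasDerivAt (fun u : ℝ => NormedSpace.exp (u • A))
      (NormedSpace.exp (t • A) * A) t := fun t =>
    hasDerivAt_iff_tendsto_slope.mpr (hurwitz_exp_slope A t)
  have hcont' : Continuous fun t : ℝ => NormedSpace.exp (t • A) * A :=
    Continuous.matrix_mul hcont continuous_const
  -- FTC on [0, T]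
  have hftc : ∀ T : ℝ, ∫ t in (0 : ℝ)..T, NormedSpace.exp (t • A) * A
      = NormedSpace.exp (T • A) - 1 := by
    intro T
    have := intervalIntegral.integral_eq_sub_of_hasDerivAt (f := fun u : ℝ => NormedSpace.exp (u • A))
      (f' := fun u : ℝ => NormedSpace.exp (u • A) * A) (a := 0) (b := T)
      (fun t _ => hder t) (hcont'.intervalIntegrable 0 T)
    rw [this]
    simp [NormedSpace.exp_zero]
  -- mulRight as CLM
  let L : Matrix (Fin n) (Fin n) ℝ →L[ℝ] Matrix (Fin n) (Fin n) ℝ :=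
    { toLinearMap := LinearMap.mulRight ℝ A
      cont := Continuous.matrix_mul continuous_id continuous_const }
  have hLint : ∀ T : ℝ, L (∫ t in (0 : ℝ)..T, NormedSpace.exp (t • A))
      = NormedSpace.exp (T • A) - 1 := by
    intro T
    rw [← hftc T]
    exact (ContinuousLinearMap.intervalIntegral_comp_comm L (hcont.intervalIntegrable 0 T)).symm
  -- limits
  have hIoi : IntegrableOn (fun t : ℝ => NormedSpace.exp (t • A)) (Set.Ioi 0) :=
    hint.mono_set Set.Ioi_subset_Ici_self
  have htend1 : Filter.Tendsto (fun T : ℝ => ∫ t in (0 : ℝ)..T, NormedSpace.exp (t • A))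
      Filter.atTop (nhds (∫ t in Set.Ioi (0 : ℝ), NormedSpace.exp (t • A))) :=
    intervalIntegral_tendsto_integral_Ioi 0 hIoi Filter.tendsto_id
  have htend2 : Filter.Tendsto (fun T : ℝ => L (∫ t in (0 : ℝ)..T, NormedSpace.exp (t • A)))
      Filter.atTop (nhds (L (∫ t in Set.Ioi (0 : ℝ), NormedSpace.exp (t • A)))) :=
    (L.continuous.tendsto _).comp htend1
  have hexp0 : Filter.Tendsto (fun T : ℝ => NormedSpace.exp (T • A)) Filter.atTop
      (nhds 0) := by
    apply squeeze_zero_norm' _ (by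
      have h1 : Filter.Tendsto (fun T : ℝ => -δ * T) Filter.atTop Filter.atBot :=
        Filter.Tendsto.const_mul_atTop_of_neg (neg_neg_iff_pos.mpr hδ) Filter.tendsto_id
      have h2 := Real.tendsto_exp_atBot.comp h1
      simpa [Function.comp, mul_zero] using h2.const_mul C)
    filter_upwards [Filter.eventually_ge_atTop (0 : ℝ)] with T hT
    simpa [neg_mul] using hnorm T hT
  have htend3 : Filter.Tendsto (fun T : ℝ => NormedSpace.exp (T • A) - 1) Filter.atTop
      (nhds (-1)) := by
    have := hexp0.sub (tendsto_const_nhds (x := (1 : Matrix (Fin n) (Fin n) ℝ)))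
    simpa using this
  have hkey : L (∫ t in Set.Ioi (0 : ℝ), NormedSpace.exp (t • A)) = -1 := by
    apply tendsto_nhds_unique _ htend3
    convert htend2 using 2
    rw [hLint]
  have hIcieq : ∫ t in Set.Ici (0 : ℝ), NormedSpace.exp (t • A)
      = ∫ t in Set.Ioi (0 : ℝ), NormedSpace.exp (t • A) :=
    integral_Ici_eq_integral_Ioi
  have hmul : (∫ t in Set.Ici (0 : ℝ), NormedSpace.exp (t • A)) * A = -1 := by
    rw [hIcieq]; exact hkey
  have hinv : A * A⁻¹ = 1 := Matrix.mul_nonsing_inv A ((Matrix.isUnit_iff_isUnit_det A).mp hunit)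
  calc ∫ t in Set.Ici (0 : ℝ), NormedSpace.exp (t • A)
      = (∫ t in Set.Ici (0 : ℝ), NormedSpace.exp (t • A)) * (A * A⁻¹) := by
        rw [hinv, mul_one]
    _ = ((∫ t in Set.Ici (0 : ℝ), NormedSpace.exp (t • A)) * A) * A⁻¹ := by
        rw [mul_assoc]
    _ = (-1) * A⁻¹ := by rw [hmul]
    _ = -A⁻¹ := by rw [neg_one_mul]
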